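/- Let K = ℝ((X)) be the field of formal Laurent series over ℝ. Then P₊ = {f² | f ∈ K} ∪ {X·f² | f ∈ K} and P₋ = {f² | f ∈ K} ∪ {−X·f² | f ∈ K} are orderings of K, and every ordering of K is equal to P₊ or to P₋. -/

import Mathlib

/-- An ordering of a (comm) ring `K`: `P + P ⊆ P`, `P·P ⊆ P`, `-1 ∉ P`, `P ∪ (-P) = K`. -/
def IsOrdering {K : Type*} [CommRing K] (P : Set K) : Prop :=
  (∀ x ∈ P, ∀ y ∈ P, x + y ∈ P) ∧ (∀ x ∈ P, ∀ y ∈ P, x * y ∈ P) ∧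
    (-1 : K) ∉ P ∧ ∀ x : K, x ∈ P ∨ -x ∈ P

/-- `sumsOfPowers K n` is the set of finite sums of `n`-th powers of elements of `K`. -/
def sumsOfPowers (K : Type*) [CommRing K] (n : ℕ) : Set K :=
  {a | ∃ (m : ℕ) (f : Fin m → K), a = ∑ i, f i ^ n}

/-- The variable `X` of the field `ℝ((X))` of formal Laurent series. -/
noncomputable def laurentX : LaurentSeries ℝ := HahnSeries.single 1 1

/-- `P₊ = K² ∪ X·K²`. -/
noncomputable def Pplus : Set (LaurentSeries ℝ) :=
  {g | ∃ f : LaurentSeries ℝ, g = f ^ 2} ∪ {g | ∃ f : LaurentSeries ℝ, g = laurentX * f ^ 2}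

/-- `P₋ = K² ∪ (-X)·K²`. -/
noncomputable def Pminus : Set (LaurentSeries ℝ) :=
  {g | ∃ f : LaurentSeries ℝ, g = f ^ 2} ∪ {g | ∃ f : LaurentSeries ℝ, g = -(laurentX * f ^ 2)}


open Finset in
noncomputable def sqc (a : ℕ → ℝ) (s : ℝ) : ℕ → ℝ
  | 0 => s
  | n+1 => (a (n+1) - ∑ i ∈ (Finset.Ioo 0 (n+1)).attach,
      sqc a s i.1 * sqc a s (n+1-i.1)) / (2*s)
decreasing_by
  · exact (Finset.mem_Ioo.mp i.2).2
  · have h := Finset.mem_Ioo.mp i.2; omega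

lemma sqc_zero (a : ℕ → ℝ) (s : ℝ) : sqc a s 0 = s := by rw [sqc]

lemma sqc_succ (a : ℕ → ℝ) (s : ℝ) (n : ℕ) :
    sqc a s (n+1) = (a (n+1) - ∑ i ∈ Finset.Ioo 0 (n+1),
      sqc a s i * sqc a s (n+1-i)) / (2*s) := by
  rw [sqc, Finset.sum_attach (Finset.Ioo 0 (n+1)) (fun i => sqc a s i * sqc a s (n+1-i))]

theorem PowerSeries.exists_eq_sq_of_pos (φ : PowerSeries ℝ)
    (h : 0 < PowerSeries.constantCoeff φ) : ∃ ψ : PowerSeries ℝ, φ = ψ ^ 2 := by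
  set c := PowerSeries.constantCoeff φ with hc
  set s := Real.sqrt c with hs
  have hs0 : 0 < s := Real.sqrt_pos.mpr h
  have hss : s * s = c := Real.mul_self_sqrt h.le
  set a : ℕ → ℝ := fun n => PowerSeries.coeff n φ with ha
  refine ⟨PowerSeries.mk (sqc a s), ?_⟩
  ext n
  rw [pow_two, PowerSeries.coeff_mul]
  simp only [PowerSeries.coeff_mk]
  rw [Finset.Nat.sum_antidiagonal_eq_sum_range_succ_mk]
  match n with
  | 0 =>
    rw [Finset.sum_range_one, Nat.sub_zero, sqc_zero, hss]
    exact hc.symm.trans (PowerSeries.coeff_zero_eq_constantCoeff_apply φ).symm |>.symm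
  | m+1 =>
    rw [Finset.sum_range_succ]
    have h1 : Finset.range (m+1) = insert 0 (Finset.Ioo 0 (m+1)) := by
      rw [Finset.range_eq_Ico, Finset.Ioo_insert_left (Nat.succ_pos m)]
    rw [h1, Finset.sum_insert (by simp)]
    have h2 : ∀ i ∈ Finset.Ioo 0 (m+1), sqc a s i * sqc a s (m+1-i) =
        sqc a s i * sqc a s (m+1-i) := fun _ _ => rfl
    rw [Nat.sub_zero, Nat.sub_self, sqc_zero, sqc_succ]
    field_simp
    ring

namespace Stmt18Aux

open HahnSeries

abbrev K := LaurentSeries ℝ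

lemma lc_eq (f : K) : f.leadingCoeff = f.coeff f.order := leadingCoeff_eq

lemma lc_mul {x y : K} (hx : x ≠ 0) (hy : y ≠ 0) :
    (x * y).leadingCoeff = x.leadingCoeff * y.leadingCoeff := by
  rw [lc_eq, order_mul hx hy, coeff_mul_order_add_order]

lemma order_mul' {x y : K} (hx : x ≠ 0) (hy : y ≠ 0) :
    (x * y).order = x.order + y.order := order_mul hx hy

lemma lc_sq {g : K} (hg : g ≠ 0) : (g ^ 2).leadingCoeff = g.leadingCoeff ^ 2 := by
  rw [pow_two, pow_two, lc_mul hg hg]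

lemma order_sq {g : K} (hg : g ≠ 0) : (g ^ 2).order = g.order + g.order := by
  rw [pow_two, order_mul' hg hg]

lemma lc_neg (f : K) : (-f).leadingCoeff = -f.leadingCoeff := by
  rw [lc_eq, lc_eq, order_neg, coeff_neg]

/-- Key decomposition: positive leading coefficient means square or `X ·` square. -/
lemma key {f : K} (hf : f ≠ 0) (hlc : 0 < f.leadingCoeff) :
    (Even f.order → ∃ g : K, f = g ^ 2) ∧
      (Odd f.order → ∃ g : K, f = laurentX * g ^ 2) := by
  have hcc : 0 < PowerSeries.constantCoeff f.powerSeriesPart := by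
    have h0 := LaurentSeries.powerSeriesPart_coeff f 0
    rw [PowerSeries.coeff_zero_eq_constantCoeff] at h0
    norm_num at h0
    rwa [h0, ← lc_eq]
  obtain ⟨ψ, hψ⟩ := PowerSeries.exists_eq_sq_of_pos _ hcc
  have hdec : f = single f.order 1 * (HahnSeries.ofPowerSeries ℤ ℝ ψ) ^ 2 := by
    conv_lhs => rw [← LaurentSeries.single_order_mul_powerSeriesPart f]
    rw [hψ, map_pow]
  have hsingle : ∀ k : ℤ, (single k (1:ℝ) : K) ^ 2 = single (k + k) 1 := by
    intro k
    rw [pow_two, single_mul_single, mul_one]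
  constructor
  · rintro ⟨k, hk⟩
    refine ⟨single k 1 * HahnSeries.ofPowerSeries ℤ ℝ ψ, ?_⟩
    rw [hdec, hk, mul_pow, hsingle]
  · rintro ⟨k, hk⟩
    refine ⟨single k 1 * HahnSeries.ofPowerSeries ℤ ℝ ψ, ?_⟩
    rw [hdec, hk, mul_pow, hsingle,
      show laurentX = single (1 : ℤ) 1 from rfl, ← mul_assoc, single_mul_single, mul_one,
      show (1 + (k + k) : ℤ) = 2 * k + 1 by ring]

lemma add_order_lc {x y : K} (h : x.coeff (min x.order y.order) + y.coeff (min x.order y.order) ≠ 0) :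
    x + y ≠ 0 ∧ (x + y).order = min x.order y.order ∧
      (x + y).leadingCoeff = x.coeff (min x.order y.order) + y.coeff (min x.order y.order) := by
  set m := min x.order y.order with hm
  have hcoeff : (x + y).coeff m = x.coeff m + y.coeff m := coeff_add
  have hne : x + y ≠ 0 := by
    intro h0
    rw [h0] at hcoeff
    exact h (by simpa using hcoeff.symm)
  have hle : (x + y).order ≤ m := order_le_of_coeff_ne_zero (by rw [hcoeff]; exact h)
  have hge : m ≤ (x + y).order := by
    by_contra hlt
    push_neg at hlt
    have hx0 : x.coeff (x + y).order = 0 :=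
      coeff_eq_zero_of_lt_order (lt_of_lt_of_le hlt (min_le_left _ _))
    have hy0 : y.coeff (x + y).order = 0 :=
      coeff_eq_zero_of_lt_order (lt_of_lt_of_le hlt (min_le_right _ _))
    exact hne (coeff_order_eq_zero.mp (by rw [coeff_add, hx0, hy0, add_zero]))
  have horder : (x + y).order = m := le_antisymm hle hge
  exact ⟨hne, horder, by rw [lc_eq, horder, hcoeff]⟩

section Q

variable (ε : ℤ → ℝ) (hadd : ∀ m n, ε (m + n) = ε m * ε n) (hpm : ∀ n, ε n = 1 ∨ ε n = -1)

def Q : Set K := {f | f = 0 ∨ 0 < ε f.order * f.leadingCoeff}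

include hadd hpm

lemma ε_zero : ε 0 = 1 := by
  rcases hpm 0 with h | h
  · exact h
  · have := hadd 0 0
    rw [add_zero, h] at this
    norm_num at this

lemma Q_isOrdering : IsOrdering (Q ε) := by
  have hεne : ∀ n, ε n ≠ 0 := by
    intro n; rcases hpm n with h | h <;> rw [h] <;> norm_num
  refine ⟨?_, ?_, ?_, ?_⟩
  · -- addition
    rintro x (rfl | hx) y hy
    · simpa using hy
    rcases hy with rfl | hy
    · simpa [Q] using Or.inr hx
    have hx0 : x ≠ 0 := by rintro rfl; simp [leadingCoeff_zero] at hx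
    have hy0 : y ≠ 0 := by rintro rfl; simp [leadingCoeff_zero] at hy
    rcases lt_trichotomy x.order y.order with hlt | heq | hgt
    · have hmin : min x.order y.order = x.order := min_eq_left hlt.le
      have hyc : y.coeff (min x.order y.order) = 0 := by
        rw [hmin]; exact coeff_eq_zero_of_lt_order hlt
      have hsum : x.coeff (min x.order y.order) + y.coeff (min x.order y.order) ≠ 0 := by
        rw [hyc, add_zero, hmin, ← lc_eq]
        intro h0; rw [h0, mul_zero] at hx; exact lt_irrefl 0 hx
      obtain ⟨hne, ho, hl⟩ := add_order_lc hsum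
      right
      rw [ho, hl, hyc, add_zero, hmin, ← lc_eq]
      exact hx
    · have hmin : min x.order y.order = x.order := by rw [heq, min_self]
      have hsum0 : 0 < ε x.order * (x.leadingCoeff + y.leadingCoeff) := by
        rw [heq] at hx ⊢
        rcases hpm y.order with h | h <;> rw [h] at hx hy ⊢ <;> nlinarith
      have hxc : x.coeff (min x.order y.order) = x.leadingCoeff := by rw [hmin, ← lc_eq]
      have hyc : y.coeff (min x.order y.order) = y.leadingCoeff := by
        rw [hmin, heq, ← lc_eq]
      have hsum : x.coeff (min x.order y.order) + y.coeff (min x.order y.order) ≠ 0 := by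
        rw [hxc, hyc]
        intro h0
        rw [h0, mul_zero] at hsum0
        exact lt_irrefl 0 hsum0
      obtain ⟨hne, ho, hl⟩ := add_order_lc hsum
      right
      rw [ho, hl, hxc, hyc, hmin]
      exact hsum0
    · have hmin : min x.order y.order = y.order := min_eq_right hgt.le
      have hxc : x.coeff (min x.order y.order) = 0 := by
        rw [hmin]; exact coeff_eq_zero_of_lt_order hgt
      have hsum : x.coeff (min x.order y.order) + y.coeff (min x.order y.order) ≠ 0 := by
        rw [hxc, zero_add, hmin, ← lc_eq]
        intro h0; rw [h0, mul_zero] at hy; exact lt_irrefl 0 hy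
      obtain ⟨hne, ho, hl⟩ := add_order_lc hsum
      right
      rw [ho, hl, hxc, zero_add, hmin, ← lc_eq]
      exact hy
  · -- multiplication
    rintro x (rfl | hx) y hy
    · left; rw [zero_mul]
    rcases hy with rfl | hy
    · left; rw [mul_zero]
    have hx0 : x ≠ 0 := by rintro rfl; simp [leadingCoeff_zero] at hx
    have hy0 : y ≠ 0 := by rintro rfl; simp [leadingCoeff_zero] at hy
    right
    rw [order_mul' hx0 hy0, lc_mul hx0 hy0, hadd]
    calc (0:ℝ) < (ε x.order * x.leadingCoeff) * (ε y.order * y.leadingCoeff) :=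
          mul_pos hx hy
      _ = ε x.order * ε y.order * (x.leadingCoeff * y.leadingCoeff) := by ring
  · -- -1 ∉ Q
    rintro (h | h)
    · exact one_ne_zero (neg_eq_zero.mp h)
    · have ho : (-1 : K).order = 0 := by rw [order_neg, order_one]
      have hl : (-1 : K).leadingCoeff = -1 := by rw [lc_neg, leadingCoeff_one]
      rw [ho, hl, ε_zero ε hadd hpm] at h
      norm_num at h
  · -- totality
    intro x
    rcases eq_or_ne x 0 with rfl | hx0
    · left; left; rfl
    rcases lt_trichotomy (ε x.order * x.leadingCoeff) 0 with h | h | h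
    · right; right
      rw [order_neg, lc_neg]
      nlinarith
    · exfalso
      rcases mul_eq_zero.mp h with h | h
      · exact hεne _ h
      · exact hx0 (leadingCoeff_eq_zero.mp h)
    · left; right; exact h

end Q


noncomputable def epsOne : ℤ → ℝ := fun _ => 1

noncomputable def epsM : ℤ → ℝ := fun n => (-1 : ℝ) ^ n

lemma epsOne_add : ∀ m n : ℤ, epsOne (m + n) = epsOne m * epsOne n := by
  intro m n; simp [epsOne]

lemma epsOne_pm : ∀ n : ℤ, epsOne n = 1 ∨ epsOne n = -1 := fun _ => Or.inl rfl

lemma epsM_add : ∀ m n : ℤ, epsM (m + n) = epsM m * epsM n := fun m n =>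
  zpow_add₀ (by norm_num : (-1 : ℝ) ≠ 0) m n

lemma epsM_pm : ∀ n : ℤ, epsM n = 1 ∨ epsM n = -1 := fun n =>
  n.even_or_odd.imp Even.neg_one_zpow Odd.neg_one_zpow

lemma laurentX_ne_zero : laurentX ≠ 0 := single_ne_zero one_ne_zero

lemma lc_laurentX : laurentX.leadingCoeff = 1 := leadingCoeff_of_single

lemma order_laurentX : laurentX.order = 1 := order_single one_ne_zero

lemma Pplus_eq : Pplus = Q epsOne := by
  ext f
  constructor
  · rintro (⟨g, rfl⟩ | ⟨g, rfl⟩)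
    · rcases eq_or_ne g 0 with rfl | hg
      · left; rw [zero_pow]; norm_num
      · right
        rw [lc_sq hg]
        have := pow_two_pos_of_ne_zero (leadingCoeff_ne_zero.mpr hg)
        simpa [epsOne] using this
    · rcases eq_or_ne g 0 with rfl | hg
      · left; rw [zero_pow, mul_zero]; norm_num
      · right
        have hg2 : g ^ 2 ≠ 0 := pow_ne_zero 2 hg
        rw [lc_mul laurentX_ne_zero hg2, lc_laurentX, lc_sq hg]
        have := pow_two_pos_of_ne_zero (leadingCoeff_ne_zero.mpr hg)
        simpa [epsOne] using this
  · rintro (rfl | h)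
    · exact Or.inl ⟨0, by rw [zero_pow]; norm_num⟩
    · have hf0 : f ≠ 0 := by
        intro h0
        rw [h0, leadingCoeff_zero, mul_zero] at h
        exact lt_irrefl 0 h
      have hlc : 0 < f.leadingCoeff := by simpa [epsOne] using h
      rcases Int.even_or_odd f.order with he | ho
      · exact Or.inl ((key hf0 hlc).1 he)
      · exact Or.inr ((key hf0 hlc).2 ho)

lemma epsM_sq (n : ℤ) : epsM n * epsM n = 1 := by
  rcases epsM_pm n with h | h <;> rw [h] <;> norm_num

lemma Pminus_eq : Pminus = Q epsM := by
  ext f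
  constructor
  · rintro (⟨g, rfl⟩ | ⟨g, rfl⟩)
    · rcases eq_or_ne g 0 with rfl | hg
      · left; rw [zero_pow]; norm_num
      · right
        rw [lc_sq hg, order_sq hg, epsM_add, epsM_sq, one_mul]
        exact pow_two_pos_of_ne_zero (leadingCoeff_ne_zero.mpr hg)
    · rcases eq_or_ne g 0 with rfl | hg
      · left; rw [zero_pow, mul_zero, neg_zero]; norm_num
      · right
        have hg2 : g ^ 2 ≠ 0 := pow_ne_zero 2 hg
        have hXg2 : laurentX * g ^ 2 ≠ 0 := mul_ne_zero laurentX_ne_zero hg2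
        rw [order_neg, lc_neg, order_mul' laurentX_ne_zero hg2,
          lc_mul laurentX_ne_zero hg2, lc_laurentX, lc_sq hg, order_laurentX, order_sq hg,
          epsM_add, epsM_add, epsM_sq]
        have h1 : epsM 1 = -1 := by simp [epsM]
        rw [h1, one_mul]
        have := pow_two_pos_of_ne_zero (leadingCoeff_ne_zero.mpr hg)
        nlinarith
  · rintro (rfl | h)
    · exact Or.inl ⟨0, by rw [zero_pow]; norm_num⟩
    · have hf0 : f ≠ 0 := by
        intro h0
        rw [h0, leadingCoeff_zero, mul_zero] at h
        exact lt_irrefl 0 h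
      rcases Int.even_or_odd f.order with he | ho
      · have h1 : epsM f.order = 1 := Even.neg_one_zpow he
        rw [h1, one_mul] at h
        exact Or.inl ((key hf0 h).1 he)
      · have h1 : epsM f.order = -1 := Odd.neg_one_zpow ho
        rw [h1] at h
        have hlc : f.leadingCoeff < 0 := by nlinarith
        have hnf0 : (-f) ≠ 0 := neg_ne_zero.mpr hf0
        have hnlc : 0 < (-f).leadingCoeff := by rw [lc_neg]; linarith
        have hno : Odd (-f).order := by rw [order_neg]; exact ho
        obtain ⟨g, hg⟩ := (key hnf0 hnlc).2 hno
        exact Or.inr ⟨g, by rw [← hg, neg_neg]⟩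

lemma sq_mem {P : Set K} (hP : IsOrdering P) (x : K) : x ^ 2 ∈ P := by
  rcases hP.2.2.2 x with h | h
  · rw [pow_two]; exact hP.2.1 x h x h
  · rw [show x ^ 2 = (-x) * (-x) by ring]; exact hP.2.1 _ h _ h

lemma zero_mem {P : Set K} (hP : IsOrdering P) : (0 : K) ∈ P := by
  have := sq_mem hP 0
  rwa [zero_pow (by norm_num)] at this

lemma eq_of_subset {P S : Set K} (hP : IsOrdering P) (hS : IsOrdering S)
    (hsub : S ⊆ P) : P = S := by
  ext f
  refine ⟨fun hf => ?_, fun hf => hsub hf⟩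
  by_contra hns
  have hf0 : f ≠ 0 := by rintro rfl; exact hns (zero_mem hS)
  have hnf : -f ∈ S := (hS.2.2.2 f).resolve_left hns
  have h1 : f * (-f) ∈ P := hP.2.1 _ hf _ (hsub hnf)
  have h2 : (f⁻¹) ^ 2 ∈ P := sq_mem hP _
  have h3 : f * (-f) * (f⁻¹) ^ 2 ∈ P := hP.2.1 _ h1 _ h2
  have heq : f * (-f) * (f⁻¹) ^ 2 = -1 := by
    field_simp
  rw [heq] at h3
  exact hP.2.2.1 h3

end Stmt18Aux

open Stmt18Aux in
/-- `P₊` and `P₋` are orderings of `ℝ((X))`, and they are the only ones. -/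
theorem stmt18 :
    IsOrdering Pplus ∧ IsOrdering Pminus ∧
      ∀ P : Set (LaurentSeries ℝ), IsOrdering P → P = Pplus ∨ P = Pminus := by
  have hPp : IsOrdering Pplus := by
    rw [Pplus_eq]; exact Q_isOrdering epsOne epsOne_add epsOne_pm
  have hPm : IsOrdering Pminus := by
    rw [Pminus_eq]; exact Q_isOrdering epsM epsM_add epsM_pm
  refine ⟨hPp, hPm, fun P hP => ?_⟩
  rcases hP.2.2.2 laurentX with hX | hX
  · left
    apply eq_of_subset hP hPp
    rintro f (⟨g, rfl⟩ | ⟨g, rfl⟩)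
    · exact sq_mem hP g
    · exact hP.2.1 _ hX _ (sq_mem hP g)
  · right
    apply eq_of_subset hP hPm
    rintro f (⟨g, rfl⟩ | ⟨g, rfl⟩)
    · exact sq_mem hP g
    · rw [show -(laurentX * g ^ 2) = (-laurentX) * g ^ 2 by ring]
      exact hP.2.1 _ hX _ (sq_mem hP g)
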